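/- If λ = (λ_1, ..., λ_n) ∈ Γ_k with λ_1 ≥ ... ≥ λ_n, then there exists a constant C > 0 depending only on n and k such that λ_1 · σ_{k-1}(λ|1) ≥ C · σ_k(λ). -/

import Mathlib

open Finset

noncomputable def esym {n : ℕ} (k : ℕ) (lam : Fin n → ℝ) : ℝ :=
  ∑ s ∈ Finset.univ.powersetCard k, ∏ i ∈ s, lam i

noncomputable def esym1 {n : ℕ} (k : ℕ) (lam : Fin n → ℝ) (i : Fin n) : ℝ :=
  ∑ s ∈ (Finset.univ.erase i).powersetCard k, ∏ j ∈ s, lam j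

noncomputable def esym2 {n : ℕ} (k : ℕ) (lam : Fin n → ℝ) (i j : Fin n) : ℝ :=
  ∑ s ∈ ((Finset.univ.erase i).erase j).powersetCard k, ∏ l ∈ s, lam l

def GardingCone (n k : ℕ) : Set (Fin n → ℝ) :=
  {lam | ∀ j : ℕ, 1 ≤ j → j ≤ k → 0 < esym j lam}

namespace NewtonAux

open Polynomial Multiset

lemma esymm_zero' (s : Multiset ℝ) : s.esymm 0 = 1 := by
  simp [Multiset.esymm]

lemma esymm_cons (a : ℝ) (s : Multiset ℝ) (k : ℕ) :
    (a ::ₘ s).esymm (k+1) = s.esymm (k+1) + a * s.esymm k := by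
  simp only [Multiset.esymm, Multiset.powersetCard_cons, Multiset.map_add, Multiset.sum_add,
    Multiset.map_map]
  rw [show ((fun (x : Multiset ℝ) => x.prod) ∘ Multiset.cons a) = (fun x => a * x.prod) from funext (fun t => Multiset.prod_cons a t), ← Multiset.sum_map_mul_left]

lemma esymm_of_card_lt {s : Multiset ℝ} {k : ℕ} (h : Multiset.card s < k) : s.esymm k = 0 := by
  rw [Multiset.esymm, Multiset.powersetCard_eq_empty _ h]
  simp

lemma esymm_card (s : Multiset ℝ) : s.esymm (Multiset.card s) = s.prod := by
  induction s using Multiset.induction with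
  | empty => simp [Multiset.esymm]
  | cons a s ih =>
      rw [Multiset.card_cons, esymm_cons, ih, esymm_of_card_lt (by simp), Multiset.prod_cons]
      ring

-- inversion: for all entries nonzero, esymm of inverses
lemma esymm_inv (s : Multiset ℝ) (h0 : (0:ℝ) ∉ s) :
    ∀ t u : ℕ, t + u = Multiset.card s →
      (s.map (fun x => x⁻¹)).esymm t * s.prod = s.esymm u := by
  induction s using Multiset.induction with
  | empty =>
      intro t u htu
      simp at htu
      obtain ⟨rfl, rfl⟩ := htu
      simp [esymm_zero']
  | cons a s ih =>
      intro t u htu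
      have ha : a ≠ 0 := fun h => h0 (h ▸ Multiset.mem_cons_self a s)
      have h0s : (0:ℝ) ∉ s := fun h => h0 (Multiset.mem_cons_of_mem h)
      rw [Multiset.card_cons] at htu
      rw [Multiset.map_cons, Multiset.prod_cons]
      rcases Nat.eq_zero_or_pos t with rfl | ht
      · -- u = card s + 1
        have hu : u = Multiset.card s + 1 := by omega
        subst hu
        rw [esymm_zero', ← Multiset.card_cons a s, esymm_card, Multiset.prod_cons]
        ring
      · obtain ⟨t', rfl⟩ := Nat.exists_eq_add_of_le ht
        rw [Nat.add_comm 1 t'] at htu ⊢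
        rcases Nat.eq_zero_or_pos u with rfl | hu
        · -- t' + 1 = card s + 1
          have hT : t' = Multiset.card s := by omega
          subst hT
          have hsp : s.prod ≠ 0 := Multiset.prod_ne_zero h0s
          rw [esymm_cons, esymm_of_card_lt (by simp), esymm_zero',
            show Multiset.card s = Multiset.card (Multiset.map (fun x => x⁻¹) s) by simp,
            esymm_card, Multiset.prod_map_inv]
          field_simp
          simp [Multiset.map_id', hsp]
        · obtain ⟨u', rfl⟩ := Nat.exists_eq_add_of_le hu
          rw [Nat.add_comm 1 u'] at htu ⊢
          rw [esymm_cons, esymm_cons]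
          have h1 : (Multiset.map (fun x => x⁻¹) s).esymm (t'+1) * s.prod = s.esymm u' := by
            apply ih h0s; omega
          have h2 : (Multiset.map (fun x => x⁻¹) s).esymm t' * s.prod = s.esymm (u'+1) := by
            apply ih h0s; omega
          calc ((Multiset.map (fun x => x⁻¹) s).esymm (t'+1) + a⁻¹ * (Multiset.map (fun x => x⁻¹) s).esymm t') * (a * s.prod)
              = a * ((Multiset.map (fun x => x⁻¹) s).esymm (t'+1) * s.prod)
                + (a⁻¹ * a) * ((Multiset.map (fun x => x⁻¹) s).esymm t' * s.prod) := by ring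
            _ = a * s.esymm u' + 1 * s.esymm (u'+1) := by rw [h1, h2, inv_mul_cancel₀ ha]
            _ = s.esymm (u'+1) + a * s.esymm u' := by ring

lemma esymm_one' (s : Multiset ℝ) : s.esymm 1 = s.sum := by
  induction s using Multiset.induction with
  | empty => rw [Multiset.sum_zero]; exact esymm_of_card_lt (by simp)
  | cons a s ih => rw [Multiset.sum_cons, esymm_cons, ih, esymm_zero']; ring

lemma sum_le_card_mul_max {s : Multiset ℝ} {a : ℝ} (h : ∀ x ∈ s, x ≤ a) :
    s.sum ≤ (Multiset.card s : ℝ) * a := by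
  induction s using Multiset.induction with
  | empty => simp
  | cons b s ih =>
      rw [Multiset.sum_cons, Multiset.card_cons]
      have hb := h b (Multiset.mem_cons_self _ _)
      have := ih (fun x hx => h x (Multiset.mem_cons_of_mem hx))
      push_cast
      nlinarith

lemma exists_max {s : Multiset ℝ} (h : s ≠ 0) : ∃ b ∈ s, ∀ x ∈ s, x ≤ b := by
  induction s using Multiset.induction with
  | empty => simp at h
  | cons a s ih =>
      rcases eq_or_ne s 0 with rfl | hs
      · exact ⟨a, Multiset.mem_cons_self _ _, by simp⟩
      · obtain ⟨b, hb, hmax⟩ := ih hs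
        rcases le_total a b with hab | hab
        · exact ⟨b, Multiset.mem_cons_of_mem hb, by
            intro x hx
            rcases Multiset.mem_cons.1 hx with rfl | hx
            · exact hab
            · exact (hmax x hx)⟩
        · exact ⟨a, Multiset.mem_cons_self _ _, by
            intro x hx
            rcases Multiset.mem_cons.1 hx with rfl | hx
            · exact le_refl x
            · exact (hmax x hx).trans hab⟩

lemma prod_linear_facts (M : Multiset ℝ) :
    ((M.map (fun x => -x)).map (fun r => X - C r)).prod ≠ 0 ∧
    ((M.map (fun x => -x)).map (fun r => X - C r)).prod.natDegree = Multiset.card M ∧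
    Multiset.card ((M.map (fun x => -x)).map (fun r => X - C r)).prod.roots = Multiset.card M ∧
    ∀ i ≤ Multiset.card M,
      ((M.map (fun x => -x)).map (fun r => X - C r)).prod.coeff i
        = M.esymm (Multiset.card M - i) := by
  set P := ((M.map (fun x => -x)).map (fun r => X - C r)).prod with hP
  have hmonic : P.Monic := by
    apply monic_multiset_prod_of_monic
    intro r hr
    exact monic_X_sub_C r
  have hP0 : P ≠ 0 := hmonic.ne_zero
  have hdeg : P.natDegree = Multiset.card M := by
    rw [hP, Polynomial.natDegree_multiset_prod_X_sub_C_eq_card]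
    simp
  have hroots : P.roots = M.map (fun x => -x) := by
    rw [hP, Polynomial.roots_multiset_prod_X_sub_C]
  have hcard : Multiset.card P.roots = Multiset.card M := by rw [hroots]; simp
  have halt : P = (M.map (fun r => X + C r)).prod := by
    rw [hP, Multiset.map_map]
    congr 1
    apply Multiset.map_congr rfl
    intro x _
    simp [sub_neg_eq_add]
  refine ⟨hP0, hdeg, hcard, ?_⟩
  intro i hi
  rw [halt, Multiset.prod_X_add_C_coeff M (by simpa using hi)]

lemma iter_deriv_RR (d : ℕ) (p : ℝ[X]) (hp : p ≠ 0)
    (hr : Multiset.card p.roots = p.natDegree) (hd : d ≤ p.natDegree) :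
    derivative^[d] p ≠ 0 ∧ (derivative^[d] p).natDegree = p.natDegree - d ∧
      Multiset.card (derivative^[d] p).roots = p.natDegree - d := by
  induction d with
  | zero => exact ⟨by simpa using hp, by simp, by simpa using hr⟩
  | succ d ih =>
      obtain ⟨hq0, hqd, hqr⟩ := ih (by omega)
      set q := derivative^[d] p with hq
      have hqdeg : q.natDegree ≠ 0 := by omega
      have hd0 : derivative q ≠ 0 := by
        intro h
        have := Polynomial.eq_C_of_derivative_eq_zero h
        rw [this] at hqdeg
        simp at hqdeg
      have hdlt : (derivative q).natDegree < q.natDegree := natDegree_derivative_lt hqdeg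
      have hub : Multiset.card (derivative q).roots ≤ p.natDegree - (d+1) := by
        have := Polynomial.card_roots' (derivative q)
        omega
      have hlb : p.natDegree - (d+1) ≤ Multiset.card (derivative q).roots := by
        have := Polynomial.card_roots_le_derivative q
        omega
      have hcard : Multiset.card (derivative q).roots = p.natDegree - (d+1) := le_antisymm hub hlb
      have hdeg : (derivative q).natDegree = p.natDegree - (d+1) := by
        have := Polynomial.card_roots' (derivative q)
        omega
      rw [Function.iterate_succ_apply']
      exact ⟨hd0, hdeg, hcard⟩

lemma coeff_iter_deriv (p : ℝ[X]) (d i : ℕ) :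
    (derivative^[d] p).coeff i = ((i+d).descFactorial d : ℝ) * p.coeff (i+d) := by
  rw [Polynomial.coeff_iterate_derivative, nsmul_eq_mul]

lemma discrim_of_RR {p : ℝ[X]} (h2 : p.natDegree = 2) (hr : Multiset.card p.roots = 2) :
    4 * (p.coeff 2 * p.coeff 0) ≤ (p.coeff 1)^2 := by
  have hs : p.Splits := splits_iff_card_roots.2 (by rw [hr, h2])
  have hfac := hs.eq_prod_roots
  obtain ⟨r, t, hrt⟩ := Multiset.card_eq_two.1 hr
  rw [hrt] at hfac
  simp only [Multiset.insert_eq_cons, Multiset.map_cons, Multiset.map_singleton,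
    Multiset.prod_cons, Multiset.prod_singleton] at hfac
  set c := p.leadingCoeff with hc
  have hexp : p = C c * X^2 - (C c * C (r + t)) * X + C c * C (r * t) := by
    rw [hfac]; ring_nf; rw [C_add, C_mul]; ring
  have h0 : p.coeff 0 = c * (r * t) := by rw [hexp]; simp
  have h1 : p.coeff 1 = -(c * (r + t)) := by
    rw [hexp]
    simp [coeff_X_pow]
  have hh2 : p.coeff 2 = c := by
    rw [hexp]
    simp [coeff_X_pow, coeff_X]
  rw [h0, h1, hh2]
  nlinarith [sq_nonneg (c * (r - t))]

lemma descFactorial_sq_le (a : ℕ) :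
    (((a+1).descFactorial a : ℝ))^2 ≤ 2 * ((a.descFactorial a : ℝ) * ((a+2).descFactorial a : ℝ)) := by
  have h1 : (a+1).descFactorial a = a.factorial * (a+1) := by
    rw [Nat.descFactorial_eq_factorial_mul_choose, Nat.choose_succ_self_right]
  have h2 : a.descFactorial a = a.factorial := Nat.descFactorial_self a
  have h3 : (a+2).descFactorial a = a.factorial * ((a+2).choose a) := by
    rw [Nat.descFactorial_eq_factorial_mul_choose]
  have h4 : 2 * ((a+2).choose a) = (a+2) * (a+1) := by
    have hsymm : (a+2).choose a = (a+2).choose 2 := by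
      have := Nat.choose_symm (n := a+2) (k := 2) (by omega)
      simpa using this
    have hdvd : 2 ∣ (a+2) * (a+1) := by
      have := Nat.even_mul_succ_self (a+1)
      rw [Nat.mul_comm]
      exact this.two_dvd
    rw [hsymm, Nat.choose_two_right, show a+2-1 = a+1 from rfl, Nat.mul_div_cancel' hdvd]
  have key : 2 * (a.descFactorial a * ((a+2).descFactorial a)) = (a.factorial)^2 * ((a+2)*(a+1)) := by
    rw [h2, h3, ← h4]; ring
  rw [h1]
  have : (((a.factorial * (a+1) : ℕ)) : ℝ)^2 = ((a.factorial : ℝ))^2 * ((a:ℝ)+1)^2 := by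
    push_cast; ring
  rw [this]
  have : (2 : ℝ) * ((a.descFactorial a : ℝ) * ((a+2).descFactorial a : ℝ)) =
      ((a.factorial : ℝ))^2 * (((a:ℝ)+2)*((a:ℝ)+1)) := by
    rw [show (2:ℝ) * ((a.descFactorial a : ℝ) * ((a+2).descFactorial a : ℝ))
        = ((2 * (a.descFactorial a * ((a+2).descFactorial a)) : ℕ) : ℝ) by push_cast; ring, key]
    push_cast; ring
  rw [this]
  have hf : (0:ℝ) < (a.factorial : ℝ) := by positivity
  have ha : (0:ℝ) ≤ (a:ℝ) := a.cast_nonneg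
  nlinarith [hf, ha, sq_nonneg ((a.factorial : ℝ))]

lemma descFactorial_cast_pos {n k : ℕ} (h : k ≤ n) : (0:ℝ) < (n.descFactorial k : ℝ) := by
  have hne : n.descFactorial k ≠ 0 := by rw [Ne, Nat.descFactorial_eq_zero_iff_lt]; omega
  exact_mod_cast Nat.pos_of_ne_zero hne

lemma newton_weak (M : Multiset ℝ) (j : ℕ) (hc : j + 2 ≤ Multiset.card M)
    (h1 : 0 < M.esymm j) (h2 : 0 < M.esymm (j+2)) :
    M.esymm j * M.esymm (j+2) ≤ M.esymm (j+1) ^ 2 := by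
  set m := Multiset.card M with hm
  set d := m - (j+2) with hd
  obtain ⟨hP0, hPdeg, hPr, hPc⟩ := prod_linear_facts M
  set P := ((M.map (fun x => -x)).map (fun r => X - C r)).prod with hPdef
  obtain ⟨hQ0, hQdeg, hQr⟩ := iter_deriv_RR d P hP0 (by rw [hPr, hPdeg]) (by omega)
  set Q := derivative^[d] P with hQdef
  have hQdeg' : Q.natDegree = j+2 := by rw [hQdeg, hPdeg]; omega
  have hQr' : Multiset.card Q.roots = j + 2 := by rw [hQr, hPdeg]; omega
  have hQc : ∀ i ≤ j+2, Q.coeff i = ((i+d).descFactorial d : ℝ) * M.esymm (j+2-i) := by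
    intro i hi
    rw [hQdef, coeff_iter_deriv, hPc (i+d) (by omega), show m - (i+d) = j+2-i by omega]
  have hlc : Q.leadingCoeff = ((j+2+d).descFactorial d : ℝ) := by
    rw [Polynomial.leadingCoeff, hQdeg', hQc (j+2) le_rfl, show j+2-(j+2) = 0 by omega,
      esymm_zero', mul_one]
  have hlcpos : (0:ℝ) < Q.leadingCoeff := by
    rw [hlc]; exact descFactorial_cast_pos (by omega)
  have hsplits : Q.Splits := splits_iff_card_roots.2 (by rw [hQr', hQdeg'])
  have hfac := hsplits.eq_prod_roots
  set ρ := Q.roots.map (fun x => -x) with hρdef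
  have hρcard : Multiset.card ρ = j + 2 := by rw [hρdef, Multiset.card_map, hQr']
  have hmapeq : (ρ.map (fun r => X + C r)).prod
      = (Multiset.map (fun a => X - C a) Q.roots).prod := by
    rw [hρdef, Multiset.map_map]
    congr 1
    apply Multiset.map_congr rfl
    intro x _
    simp [sub_eq_add_neg]
  have hQfac2 : Q = C Q.leadingCoeff * (ρ.map (fun r => X + C r)).prod := by
    rw [hmapeq]; exact hfac
  have hρe : ∀ t ≤ j+2, Q.leadingCoeff * ρ.esymm t
      = ((j+2-t+d).descFactorial d : ℝ) * M.esymm t := by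
    intro t ht
    have h := hQc (j+2-t) (by omega)
    rw [hQfac2, Polynomial.coeff_C_mul,
      Multiset.prod_X_add_C_coeff ρ (by rw [hρcard]; omega), hρcard,
      show j+2 - (j+2-t) = t by omega] at h
    exact h
  have hρprod : Q.leadingCoeff * ρ.prod = ((d).descFactorial d : ℝ) * M.esymm (j+2) := by
    have h := hρe (j+2) le_rfl
    have hc2 : ρ.esymm (j+2) = ρ.prod := by rw [← hρcard]; exact esymm_card ρ
    rw [hc2] at h
    rwa [show j+2-(j+2)+d = d by omega] at h
  have hρprod_ne : ρ.prod ≠ 0 := by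
    intro h
    rw [h, mul_zero] at hρprod
    have hpos : (0:ℝ) < ((d).descFactorial d : ℝ) * M.esymm (j+2) := by
      exact mul_pos (descFactorial_cast_pos le_rfl) h2
    linarith
  have h0ρ : (0:ℝ) ∉ ρ := fun h => hρprod_ne (Multiset.prod_eq_zero h)
  set ν := ρ.map (fun x => x⁻¹) with hνdef
  have hνcard : Multiset.card ν = j+2 := by rw [hνdef, Multiset.card_map, hρcard]
  have hνe : ∀ t u : ℕ, t + u = j+2 → ν.esymm t * ρ.prod = ρ.esymm u := by
    intro t u htu
    exact esymm_inv ρ h0ρ t u (by rw [hρcard]; exact htu)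
  obtain ⟨hP20, hP2deg, hP2r, hP2c⟩ := prod_linear_facts ν
  set P2 := ((ν.map (fun x => -x)).map (fun r => X - C r)).prod with hP2def
  obtain ⟨hR0, hRdeg, hRr⟩ := iter_deriv_RR j P2 hP20 (by rw [hP2r, hP2deg])
    (by rw [hP2deg, hνcard]; omega)
  set R := derivative^[j] P2 with hRdef
  have hRdeg' : R.natDegree = 2 := by rw [hRdeg, hP2deg, hνcard]; omega
  have hRr' : Multiset.card R.roots = 2 := by rw [hRr, hP2deg, hνcard]; omega
  have hRc : ∀ i ≤ 2, R.coeff i = ((i+j).descFactorial j : ℝ) * ν.esymm (2-i) := by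
    intro i hi
    rw [hRdef, coeff_iter_deriv, hP2c (i+j) (by rw [hνcard]; omega), hνcard,
      show j+2-(i+j) = 2-i by omega]
  have hdisc := discrim_of_RR hRdeg' hRr'
  set L := Q.leadingCoeff with hL
  set pr := ρ.prod with hpr
  -- the three coefficient identities
  have key0 : R.coeff 0 * (pr * L) = ((j).descFactorial j : ℝ) *
      (((2+d).descFactorial d : ℝ) * M.esymm j) := by
    rw [hRc 0 (by omega)]
    have e1 : ν.esymm 2 * pr = ρ.esymm j := hνe 2 j (by omega)
    have e2 : L * ρ.esymm j = ((2+d).descFactorial d : ℝ) * M.esymm j := by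
      have := hρe j (by omega)
      rwa [show j+2-j+d = 2+d by omega] at this
    calc ((0+j).descFactorial j : ℝ) * ν.esymm (2-0) * (pr * L)
        = ((j).descFactorial j : ℝ) * ((ν.esymm 2 * pr) * L) := by norm_num; ring
      _ = ((j).descFactorial j : ℝ) * (((2+d).descFactorial d : ℝ) * M.esymm j) := by
          rw [e1, mul_comm (ρ.esymm j) L, e2]
  have key1 : R.coeff 1 * (pr * L) = ((1+j).descFactorial j : ℝ) *
      (((1+d).descFactorial d : ℝ) * M.esymm (j+1)) := by
    rw [hRc 1 (by omega)]
    have e1 : ν.esymm 1 * pr = ρ.esymm (j+1) := hνe 1 (j+1) (by omega)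
    have e2 : L * ρ.esymm (j+1) = ((1+d).descFactorial d : ℝ) * M.esymm (j+1) := by
      have := hρe (j+1) (by omega)
      rwa [show j+2-(j+1)+d = 1+d by omega] at this
    calc ((1+j).descFactorial j : ℝ) * ν.esymm (2-1) * (pr * L)
        = ((1+j).descFactorial j : ℝ) * ((ν.esymm 1 * pr) * L) := by norm_num; ring
      _ = ((1+j).descFactorial j : ℝ) * (((1+d).descFactorial d : ℝ) * M.esymm (j+1)) := by
          rw [e1, mul_comm (ρ.esymm (j+1)) L, e2]
  have key2 : R.coeff 2 * (pr * L) = ((2+j).descFactorial j : ℝ) *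
      (((d).descFactorial d : ℝ) * M.esymm (j+2)) := by
    rw [hRc 2 (by omega)]
    have e1 : ν.esymm 0 * pr = ρ.esymm (j+2) := hνe 0 (j+2) (by omega)
    have e2 : L * ρ.esymm (j+2) = ((d).descFactorial d : ℝ) * M.esymm (j+2) := by
      have := hρe (j+2) le_rfl
      rwa [show j+2-(j+2)+d = d by omega] at this
    calc ((2+j).descFactorial j : ℝ) * ν.esymm (2-2) * (pr * L)
        = ((2+j).descFactorial j : ℝ) * ((ν.esymm 0 * pr) * L) := by norm_num; ring
      _ = ((2+j).descFactorial j : ℝ) * (((d).descFactorial d : ℝ) * M.esymm (j+2)) := by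
          rw [e1, mul_comm (ρ.esymm (j+2)) L, e2]
  set B0 : ℝ := ((j).descFactorial j : ℝ)
  set B1 : ℝ := ((1+j).descFactorial j : ℝ)
  set B2 : ℝ := ((2+j).descFactorial j : ℝ)
  set A0 : ℝ := ((d).descFactorial d : ℝ)
  set A1 : ℝ := ((1+d).descFactorial d : ℝ)
  set A2 : ℝ := ((2+d).descFactorial d : ℝ)
  have main : 4 * ((B2 * (A0 * M.esymm (j+2))) * (B0 * (A2 * M.esymm j)))
      ≤ (B1 * (A1 * M.esymm (j+1)))^2 := by
    have hmul := mul_le_mul_of_nonneg_right hdisc (sq_nonneg (pr * L))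
    calc 4 * ((B2 * (A0 * M.esymm (j+2))) * (B0 * (A2 * M.esymm j)))
        = 4 * ((R.coeff 2 * (pr * L)) * (R.coeff 0 * (pr * L))) := by rw [key2, key0]
      _ = 4 * (R.coeff 2 * R.coeff 0) * (pr * L)^2 := by ring
      _ ≤ (R.coeff 1)^2 * (pr * L)^2 := hmul
      _ = (R.coeff 1 * (pr * L))^2 := by ring
      _ = (B1 * (A1 * M.esymm (j+1)))^2 := by rw [key1]
  have bb : B1^2 ≤ 2 * (B0 * B2) := by
    have := descFactorial_sq_le j
    rw [show j+1 = 1+j by omega, show j+2 = 2+j by omega] at this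
    exact this
  have aa : A1^2 ≤ 2 * (A0 * A2) := by
    have := descFactorial_sq_le d
    rw [show d+1 = 1+d by omega, show d+2 = 2+d by omega] at this
    exact this
  have hB0 : (0:ℝ) < B0 := descFactorial_cast_pos le_rfl
  have hB1 : (0:ℝ) < B1 := descFactorial_cast_pos (by omega)
  have hB2 : (0:ℝ) < B2 := descFactorial_cast_pos (by omega)
  have hA0 : (0:ℝ) < A0 := descFactorial_cast_pos le_rfl
  have hA1 : (0:ℝ) < A1 := descFactorial_cast_pos (by omega)
  have hA2 : (0:ℝ) < A2 := descFactorial_cast_pos (by omega)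
  have hprodpos : (0:ℝ) < M.esymm j * M.esymm (j+2) := mul_pos h1 h2
  have hcomb : (B1*A1)^2 ≤ (2*(B0*B2)) * (2*(A0*A2)) := by nlinarith [bb, aa, sq_nonneg A1, hA0, hA1, hA2, hB0, hB1, hB2]
  have step1 : (B1*A1)^2 * (M.esymm j * M.esymm (j+2))
      ≤ (2*(B0*B2)) * (2*(A0*A2)) * (M.esymm j * M.esymm (j+2)) :=
    mul_le_mul_of_nonneg_right hcomb hprodpos.le
  have step2 : (2*(B0*B2)) * (2*(A0*A2)) * (M.esymm j * M.esymm (j+2))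
      ≤ (B1*A1)^2 * M.esymm (j+1)^2 := by
    calc (2*(B0*B2)) * (2*(A0*A2)) * (M.esymm j * M.esymm (j+2))
        = 4 * ((B2 * (A0 * M.esymm (j+2))) * (B0 * (A2 * M.esymm j))) := by ring
      _ ≤ (B1 * (A1 * M.esymm (j+1)))^2 := main
      _ = (B1*A1)^2 * M.esymm (j+1)^2 := by ring
  have hBA : (0:ℝ) < (B1*A1)^2 := by positivity
  have := step1.trans step2
  exact le_of_mul_le_mul_left (by linarith [this]) hBA

/-- If `a ::ₘ M` is in the Gårding cone `Γ_k` then the truncated multiset has positive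
elementary symmetric functions up to `k-1`. -/
lemma gamma_erase : ∀ (k : ℕ) (a : ℝ) (M : Multiset ℝ), k ≤ Multiset.card M + 1 →
    (∀ j, 1 ≤ j → j ≤ k → 0 < (a ::ₘ M).esymm j) → ∀ j, j + 1 ≤ k → 0 < M.esymm j := by
  intro k
  induction k with
  | zero => intro a M _ _ j hj; omega
  | succ K ih =>
      intro a M hcard hyp j hj
      rcases Nat.lt_or_ge (j+1) (K+1) with hlt | hge
      · exact ih a M (by omega) (fun i h1 h2 => hyp i h1 (by omega)) j (by omega)
      · -- j = K
        have hjK : j = K := by omega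
        subst hjK
        rcases Nat.eq_zero_or_pos j with rfl | hK
        · rw [esymm_zero']; norm_num
        · obtain ⟨K', rfl⟩ : ∃ K', j = K'+1 := ⟨j-1, by omega⟩
          by_contra hK1
          push_neg at hK1
          have hpos : 0 < M.esymm K' :=
            ih a M (by omega) (fun i h1 h2 => hyp i h1 (by omega)) K' (by omega)
          have hσK : 0 < M.esymm (K'+1) + a * M.esymm K' := by
            have := hyp (K'+1) (by omega) (by omega)
            rwa [esymm_cons] at this
          have hσK1 : 0 < M.esymm (K'+2) + a * M.esymm (K'+1) := by
            have := hyp (K'+2) (by omega) (by omega)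
            rwa [esymm_cons] at this
          have haK : 0 < a * M.esymm K' := by linarith
          have ha : 0 < a := by
            rcases mul_pos_iff.1 haK with ⟨h, _⟩ | ⟨_, h⟩
            · exact h
            · linarith
          have he2 : 0 < M.esymm (K'+2) := by nlinarith
          have hcM : K' + 2 ≤ Multiset.card M := by
            by_contra hcc
            push_neg at hcc
            rw [esymm_of_card_lt hcc] at he2
            exact lt_irrefl _ he2
          have hnewton := newton_weak M K' hcM hpos he2
          have t1 : M.esymm K' * (a * (-(M.esymm (K'+1)))) < M.esymm K' * M.esymm (K'+2) := by
            apply mul_lt_mul_of_pos_left _ hpos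
            nlinarith
          have t3 : (-(M.esymm (K'+1))) * (-(M.esymm (K'+1)))
              ≤ (a * M.esymm K') * (-(M.esymm (K'+1))) := by
            apply mul_le_mul_of_nonneg_right _ (by linarith)
            linarith
          nlinarith [t1, t3, hnewton]

/-- Main inequality, multiset version. -/
lemma main_ineq : ∀ (m : ℕ) (M : Multiset ℝ) (a : ℝ) (k : ℕ), Multiset.card M = m →
    1 ≤ k → k ≤ m + 1 → (∀ x ∈ M, x ≤ a) →
    (∀ j, 1 ≤ j → j ≤ k → 0 < (a ::ₘ M).esymm j) →
    (((m + 1 - k : ℕ) : ℝ) + 1)⁻¹ * (a ::ₘ M).esymm k ≤ a * M.esymm (k-1) := by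
  intro m
  induction m with
  | zero =>
      intro M a k hcard hk1 hk2 hmax hyp
      -- k = 1, M = 0
      have hk : k = 1 := by omega
      subst hk
      have hM : M = 0 := Multiset.card_eq_zero.1 hcard
      subst hM
      have h := hyp 1 le_rfl le_rfl
      have h0 : (0 : Multiset ℝ).esymm 1 = 0 := esymm_of_card_lt (by simp)
      have h1 : (0 : Multiset ℝ).esymm (1-1) = 1 := esymm_zero' 0
      rw [esymm_cons, esymm_zero', h0] at h
      rw [esymm_cons, esymm_zero', h0]
      norm_num at h ⊢
  | succ m ih =>
      intro M a k hcard hk1 hk2 hmax hyp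
      obtain ⟨k', rfl⟩ : ∃ k', k = k'+1 := ⟨k-1, by omega⟩
      have hσ1 : 0 < (a ::ₘ M).esymm 1 := hyp 1 le_rfl (by omega)
      have hsum : (a ::ₘ M).esymm 1 = M.sum + a := by
        rw [show (1:ℕ) = 0+1 from rfl, esymm_cons, esymm_one', esymm_zero', mul_one]
      have hMsum : M.sum ≤ ((m:ℝ)+1) * a := by
        have := sum_le_card_mul_max hmax
        rw [hcard] at this
        push_cast at this
        linarith
      have ha : 0 < a := by
        rw [hsum] at hσ1
        nlinarith [Nat.cast_nonneg (α := ℝ) m]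
      have hek1 : 0 < M.esymm k' :=
        gamma_erase (k'+1) a M (by omega) hyp k' (by omega)
      have hrec : (a ::ₘ M).esymm (k'+1) = M.esymm (k'+1) + a * M.esymm k' := esymm_cons a M k'
      have hCpos : (0:ℝ) < ((m + 1 + 1 - (k'+1) : ℕ) : ℝ) + 1 := by positivity
      have hC1 : (((m + 1 + 1 - (k'+1) : ℕ) : ℝ) + 1)⁻¹ ≤ 1 := by
        rw [inv_le_one_iff₀]
        right
        have : (0:ℝ) ≤ ((m + 1 + 1 - (k'+1) : ℕ) : ℝ) := Nat.cast_nonneg _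
        linarith
      have hgoalk : (k'+1) - 1 = k' := by omega
      rw [hgoalk]
      by_cases hek : M.esymm (k'+1) ≤ 0
      · have hσk : 0 < (a ::ₘ M).esymm (k'+1) := hyp (k'+1) (by omega) le_rfl
        have h2 : (a ::ₘ M).esymm (k'+1) ≤ a * M.esymm k' := by rw [hrec]; linarith
        calc (((m + 1 + 1 - (k'+1) : ℕ) : ℝ) + 1)⁻¹ * (a ::ₘ M).esymm (k'+1)
            ≤ 1 * (a ::ₘ M).esymm (k'+1) := mul_le_mul_of_nonneg_right hC1 hσk.le
          _ = (a ::ₘ M).esymm (k'+1) := one_mul _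
          _ ≤ a * M.esymm k' := h2
      · push_neg at hek
        have hcardk : k' + 1 ≤ m + 1 := by
          by_contra hcc
          push_neg at hcc
          rw [esymm_of_card_lt (by omega)] at hek
          exact lt_irrefl _ hek
        have hM0 : M ≠ 0 := by
          intro h0
          rw [h0] at hcard
          simp at hcard
        obtain ⟨b, hbM, hbmax⟩ := exists_max hM0
        have hMcons : M = b ::ₘ M.erase b := (Multiset.cons_erase hbM).symm
        set M' := M.erase b with hM'def
        have hcardM' : Multiset.card M' = m := by
          rw [hM'def, Multiset.card_erase_of_mem hbM, hcard]
          rfl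
        have hMgamma : ∀ j, 1 ≤ j → j ≤ k'+1 → 0 < M.esymm j := by
          intro j h1j hjk
          rcases Nat.lt_or_ge j (k'+1) with hlt | hge
          · exact gamma_erase (k'+1) a M (by omega) hyp j (by omega)
          · have : j = k'+1 := by omega
            subst this
            exact hek
        have hMgamma' : ∀ j, 1 ≤ j → j ≤ k'+1 → 0 < (b ::ₘ M').esymm j := by
          intro j h1 h2
          rw [← hMcons]
          exact hMgamma j h1 h2
        have hmax' : ∀ x ∈ M', x ≤ b := fun x hx => hbmax x (Multiset.mem_of_mem_erase hx)
        have hIH := ih M' b (k'+1) hcardM' (by omega) (by omega) hmax' hMgamma'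
        rw [← hMcons] at hIH
        -- b * M'.esymm k' ≤ a * M.esymm k'
        have hb : 0 < b := by
          have hs1 : 0 < M.esymm 1 := hMgamma 1 le_rfl (by omega)
          rw [esymm_one'] at hs1
          have hsb := sum_le_card_mul_max (s := M) (a := b) hbmax
          nlinarith [Nat.cast_nonneg (α := ℝ) (Multiset.card M)]
        have hab : b ≤ a := hmax b hbM
        have hchain : b * M'.esymm k' ≤ a * M.esymm k' := by
          rcases Nat.eq_zero_or_pos k' with rfl | hk'pos
          · rw [esymm_zero', esymm_zero']
            linarith
          · obtain ⟨k'', rfl⟩ : ∃ k'', k' = k''+1 := ⟨k'-1, by omega⟩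
            have hrec2 : M.esymm (k''+1) = M'.esymm (k''+1) + b * M'.esymm k'' := by
              rw [hMcons]
              exact esymm_cons b M' k''
            have h1 : 0 < M'.esymm (k''+1) :=
              gamma_erase (k''+2) b M' (by omega) hMgamma' (k''+1) (by omega)
            have h2 : 0 < M'.esymm k'' :=
              gamma_erase (k''+2) b M' (by omega) hMgamma' k'' (by omega)
            rw [hrec2]
            have e1 : b * M'.esymm (k''+1) ≤ a * M'.esymm (k''+1) :=
              mul_le_mul_of_nonneg_right hab h1.le
            nlinarith [mul_pos (mul_pos ha hb) h2]
        -- from hIH : ((m+1-(k'+1):ℕ):ℝ + 1)⁻¹ * M.esymm (k'+1) ≤ b * M'.esymm k'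
        have hconst : ((m + 1 - (k'+1) : ℕ) : ℝ) + 1 = ((m + 1 + 1 - (k'+1) : ℕ) : ℝ) := by
          have : (m + 1 - (k'+1) : ℕ) + 1 = (m + 1 + 1 - (k'+1) : ℕ) := by omega
          exact_mod_cast congrArg (Nat.cast : ℕ → ℝ) this
        set r : ℝ := ((m + 1 + 1 - (k'+1) : ℕ) : ℝ) with hrdef
        have hr1 : 1 ≤ r := by
          rw [hrdef]
          exact_mod_cast Nat.one_le_iff_ne_zero.2 (by omega)
        rw [hconst] at hIH
        have hE1 : M.esymm (k'+1) ≤ r * (a * M.esymm k') := by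
          have h' : r⁻¹ * M.esymm (k'+1) ≤ a * M.esymm k' := le_trans hIH hchain
          have := mul_le_mul_of_nonneg_left h' (by linarith : (0:ℝ) ≤ r)
          rw [← mul_assoc, mul_inv_cancel₀ (by linarith : r ≠ 0), one_mul] at this
          exact this
        have hfinal : (a ::ₘ M).esymm (k'+1) ≤ (r + 1) * (a * M.esymm k') := by
          rw [hrec]
          nlinarith [mul_pos ha hek1]
        rw [inv_mul_le_iff₀ hCpos]
        calc (a ::ₘ M).esymm (k'+1) ≤ (r + 1) * (a * M.esymm k') := hfinal
          _ = (((m + 1 + 1 - (k'+1) : ℕ) : ℝ) + 1) * (a * M.esymm k') := by rw [hrdef]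

end NewtonAux

theorem stmt5 {n : ℕ} (k : ℕ) (hk : 1 ≤ k) (hkn : k ≤ n) :
    ∃ C : ℝ, 0 < C ∧ ∀ lam : Fin n → ℝ, lam ∈ GardingCone n k → Antitone lam →
      lam ⟨0, by omega⟩ * esym1 (k - 1) lam ⟨0, by omega⟩ ≥ C * esym k lam := by
  refine ⟨(((n - k : ℕ) : ℝ) + 1)⁻¹, by positivity, ?_⟩
  intro lam hG hA
  set i0 : Fin n := ⟨0, by omega⟩ with hi0
  set M : Multiset ℝ := (Finset.univ.erase i0).val.map lam with hM
  set a : ℝ := lam i0 with ha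
  have huniv : (Finset.univ : Finset (Fin n)).val.map lam = a ::ₘ M := by
    rw [hM, Finset.erase_val, ← Multiset.map_cons,
      Multiset.cons_erase (Finset.mem_univ i0 : i0 ∈ Finset.univ)]
  have hcardM : Multiset.card M = n - 1 := by
    rw [hM, Multiset.card_map]
    have : Multiset.card (Finset.univ.erase i0).val = (Finset.univ.erase i0).card := rfl
    rw [this, Finset.card_erase_of_mem (Finset.mem_univ i0), Finset.card_univ, Fintype.card_fin]
  have hesym : ∀ j, esym j lam = (a ::ₘ M).esymm j := by
    intro j
    rw [← huniv, esym]
    exact (Finset.esymm_map_val lam Finset.univ j).symm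
  have hesym1 : esym1 (k-1) lam i0 = M.esymm (k-1) := by
    rw [esym1, hM]
    exact (Finset.esymm_map_val lam (Finset.univ.erase i0) (k-1)).symm
  have hmax : ∀ x ∈ M, x ≤ a := by
    intro x hx
    rw [hM] at hx
    obtain ⟨i, _, rfl⟩ := Multiset.mem_map.1 hx
    exact hA (show i0 ≤ i from by simp [hi0, Fin.le_def])
  have hyp : ∀ j, 1 ≤ j → j ≤ k → 0 < (a ::ₘ M).esymm j := by
    intro j h1 h2
    rw [← hesym j]
    exact hG j h1 h2
  have hmain := NewtonAux.main_ineq (n-1) M a k hcardM hk (by omega) hmax hyp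
  have hconst : ((n - 1 + 1 - k : ℕ) : ℝ) = ((n - k : ℕ) : ℝ) := by
    congr 1
    omega
  rw [hconst] at hmain
  show a * esym1 (k-1) lam i0 ≥ (((n - k : ℕ) : ℝ) + 1)⁻¹ * esym k lam
  rw [ge_iff_le, hesym k, hesym1]
  exact hmain
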